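/- Every derivation D of g(γ,Q) can be written as D = ad x + Σ_{i=1}^d c_i ∂_i for some element x∈g and complex scalars c_1,…,c_d, where ∂_i is the derivation defined by ∂_i(L_m)=m_i L_m; equivalently, Der(g) is spanned by the inner derivations together with ∂_1,…,∂_d, and ad L_0 = γ_1∂_1+⋯+γ_d∂_d. -/

import Mathlib

open scoped BigOperators

namespace QTorus

/-- σ(m,n) = ∏_{i<j} q_{ji}^{m_j n_i}. -/
noncomputable def qsigma (d : ℕ) (Q : Matrix (Fin d) (Fin d) ℂ) (m n : Fin d → ℤ) : ℂ :=
  ∏ i : Fin d, ∏ j : Fin d, if i < j then Q j i ^ (m j * n i) else 1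

/-- The radical subgroup R = {m | σ(m,n)=σ(n,m) for all n}. -/
def Rset (d : ℕ) (Q : Matrix (Fin d) (Fin d) ℂ) : Set (Fin d → ℤ) :=
  {m | ∀ n : Fin d → ℤ, qsigma d Q m n = qsigma d Q n m}

/-- (γ|m) = ∑ γ_i m_i. -/
noncomputable def ip (d : ℕ) (γ : Fin d → ℂ) (m : Fin d → ℤ) : ℂ :=
  ∑ i : Fin d, γ i * (m i : ℂ)

/-- The underlying vector space of g(γ,Q): formal ℂ-linear combinations of basis
vectors indexed by ℤ^d. -/
abbrev g (d : ℕ) := (Fin d → ℤ) →₀ ℂ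

/-- The basis vector L_m. -/
noncomputable def L (d : ℕ) (m : Fin d → ℤ) : g d := Finsupp.single m 1

/-- Hypotheses on the matrix Q: nonzero entries, q_{ii}=1, q_{ij}q_{ji}=1. -/
def QOk (d : ℕ) (Q : Matrix (Fin d) (Fin d) ℂ) : Prop :=
  (∀ i, Q i i = 1) ∧ (∀ i j, Q i j * Q j i = 1) ∧ (∀ i j, Q i j ≠ 0)

/-- γ is generic: γ_1,…,γ_d are linearly independent over ℚ. -/
def Generic (d : ℕ) (γ : Fin d → ℂ) : Prop := LinearIndependent ℚ γ

open Classical in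
/-- Structure constants of g(γ,Q): [L_m, L_n] = sc(m,n) • L_{m+n}. -/
noncomputable def sc (d : ℕ) (Q : Matrix (Fin d) (Fin d) ℂ) (γ : Fin d → ℂ)
    (m n : Fin d → ℤ) : ℂ :=
  if m ∈ Rset d Q then
    (if n ∈ Rset d Q then qsigma d Q m n * ip d γ (n - m)
     else qsigma d Q m n * ip d γ n)
  else
    (if n ∈ Rset d Q then -(qsigma d Q n m * ip d γ m)
     else qsigma d Q m n - qsigma d Q n m)

/-- The bracket of g(γ,Q), as the bilinear extension of
[L_m, L_n] = sc(m,n) • L_{m+n}. -/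
noncomputable def br (d : ℕ) (Q : Matrix (Fin d) (Fin d) ℂ) (γ : Fin d → ℂ)
    (x y : g d) : g d :=
  x.sum fun m a => y.sum fun n b => Finsupp.single (m + n) (a * b * sc d Q γ m n)

/-- A Lie algebra automorphism of g(γ,Q): a linear equivalence preserving the bracket. -/
def IsAut (d : ℕ) (Q : Matrix (Fin d) (Fin d) ℂ) (γ : Fin d → ℂ)
    (θ : g d ≃ₗ[ℂ] g d) : Prop :=
  ∀ x y : g d, θ (br d Q γ x y) = br d Q γ (θ x) (θ y)

/-- A derivation of g(γ,Q). -/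
def IsDer (d : ℕ) (Q : Matrix (Fin d) (Fin d) ℂ) (γ : Fin d → ℂ)
    (D : g d →ₗ[ℂ] g d) : Prop :=
  ∀ x y : g d, D (br d Q γ x y) = br d Q γ (D x) y + br d Q γ x (D y)

open Classical in
/-- δ(n,R) = 1 if n ∈ R, 0 otherwise. -/
noncomputable def deltaR (d : ℕ) (Q : Matrix (Fin d) (Fin d) ℂ) (n : Fin d → ℤ) : ℕ :=
  if n ∈ Rset d Q then 1 else 0

/-- A 2-cocycle on g(γ,Q). -/
def IsCocycle (d : ℕ) (Q : Matrix (Fin d) (Fin d) ℂ) (γ : Fin d → ℂ)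
    (α : g d →ₗ[ℂ] g d →ₗ[ℂ] ℂ) : Prop :=
  (∀ x y : g d, α x y = - α y x) ∧
  (∀ x y z : g d,
    α (br d Q γ x y) z + α (br d Q γ z x) y + α (br d Q γ y z) x = 0)

/-- i ↔ j is one of the exceptional index pairs (2l-1,2l) (1-based) of the rational
normal form. Here indices are 0-based. -/
def OffDiagPair (z : ℕ) (i j : ℕ) : Prop :=
  ∃ l : ℕ, l < z ∧ ((i = 2 * l ∧ j = 2 * l + 1) ∨ (i = 2 * l + 1 ∧ j = 2 * l))

/-- Q is in rational normal form with parameters z and k_1,…,k_d (0-based indexing: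
the paper's pair (2i-1,2i) is the Lean pair (2l, 2l+1) with l = i-1). -/
def IsRNF (d : ℕ) (Q : Matrix (Fin d) (Fin d) ℂ) (z : ℕ) (k : Fin d → ℕ) : Prop :=
  0 < z ∧ 2 * z ≤ d ∧
  (∀ i j : Fin d, ¬ OffDiagPair z i.val j.val → Q i j = 1) ∧
  (∀ (l : ℕ) (_ : l < z) (hi : 2 * l < d) (hj : 2 * l + 1 < d),
      IsPrimitiveRoot (Q ⟨2 * l, hi⟩ ⟨2 * l + 1, hj⟩) (k ⟨2 * l, hi⟩) ∧
      Q ⟨2 * l + 1, hj⟩ ⟨2 * l, hi⟩ = (Q ⟨2 * l, hi⟩ ⟨2 * l + 1, hj⟩)⁻¹ ∧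
      k ⟨2 * l + 1, hj⟩ = k ⟨2 * l, hi⟩ ∧
      1 < k ⟨2 * l, hi⟩) ∧
  (∀ (i : ℕ) (_ : i + 1 < 2 * z) (h1 : i < d) (h2 : i + 1 < d),
      k ⟨i + 1, h2⟩ ∣ k ⟨i, h1⟩) ∧
  (∀ i : Fin d, 2 * z ≤ i.val → k i = 1)

/-- The vector k_1 e_1 ∈ ℤ^d. -/
noncomputable def k1e1 (d : ℕ) (k : Fin d → ℕ) (hd : 0 < d) : Fin d → ℤ :=
  Pi.single ⟨0, hd⟩ (k ⟨0, hd⟩ : ℤ)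

/-- A 2-cocycle is normalized if α(L_{m-k₁e₁}, L_{k₁e₁})=0 for m ∈ R, m ≠ 2k₁e₁,
α(L_0, L_{2k₁e₁})=0, α(L_0, L_s)=0 for s ∉ R, and α(L_m,L_n)=0 whenever m+n ≠ 0. -/
def IsNormalized (d : ℕ) (Q : Matrix (Fin d) (Fin d) ℂ) (k : Fin d → ℕ) (hd : 0 < d)
    (α : g d →ₗ[ℂ] g d →ₗ[ℂ] ℂ) : Prop :=
  (∀ m ∈ Rset d Q, m ≠ 2 • k1e1 d k hd →
      α (L d (m - k1e1 d k hd)) (L d (k1e1 d k hd)) = 0) ∧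
  α (L d 0) (L d (2 • k1e1 d k hd)) = 0 ∧
  (∀ s, s ∉ Rset d Q → α (L d 0) (L d s) = 0) ∧
  (∀ m n : Fin d → ℤ, m + n ≠ 0 → α (L d m) (L d n) = 0)

/-- The degree derivation ∂_i, acting by ∂_i(L_m) = m_i L_m. -/
noncomputable def deg (d : ℕ) (i : Fin d) (y : g d) : g d :=
  y.sum fun m a => Finsupp.single m ((m i : ℂ) * a)

open Classical in
/-- The 2-cocycle α₁: α₁(L_m,L_n) = δ_{m+n,0}((m_γ)³-m_γ)/12 for m ∈ R, 0 otherwise,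
where m_γ = (γ|m)/(γ|k₁e₁). -/
noncomputable def alpha1 (d : ℕ) (Q : Matrix (Fin d) (Fin d) ℂ) (γ : Fin d → ℂ)
    (k : Fin d → ℕ) (hd : 0 < d) (x y : g d) : ℂ :=
  x.sum fun m a => y.sum fun n b => a * b *
    (if m ∈ Rset d Q ∧ m + n = 0 then
       ((ip d γ m / ip d γ (k1e1 d k hd)) ^ 3 - ip d γ m / ip d γ (k1e1 d k hd)) / 12
     else 0)

open Classical in
/-- The 2-cocycle α₂: α₂(L_r,L_s) = δ_{r+s,0} σ(r,-r)(γ|r)/(γ|k₁e₁) for r ∉ R,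
0 otherwise. -/
noncomputable def alpha2 (d : ℕ) (Q : Matrix (Fin d) (Fin d) ℂ) (γ : Fin d → ℂ)
    (k : Fin d → ℕ) (hd : 0 < d) (x y : g d) : ℂ :=
  x.sum fun m a => y.sum fun n b => a * b *
    (if m ∉ Rset d Q ∧ m + n = 0 then
       qsigma d Q m (-m) * (ip d γ m / ip d γ (k1e1 d k hd))
     else 0)

set_option linter.unusedSectionVars false

variable {d : ℕ} {Q : Matrix (Fin d) (Fin d) ℂ} {γ : Fin d → ℂ}

section Qsigma
variable (hQ : QOk d Q)
include hQ

lemma qsigma_ne_zero (m n : Fin d → ℤ) : qsigma d Q m n ≠ 0 := by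
  apply Finset.prod_ne_zero_iff.2
  intro i _
  apply Finset.prod_ne_zero_iff.2
  intro j _
  split
  · exact zpow_ne_zero _ (hQ.2.2 j i)
  · exact one_ne_zero

lemma qsigma_add_left (m m' n : Fin d → ℤ) :
    qsigma d Q (m + m') n = qsigma d Q m n * qsigma d Q m' n := by
  unfold qsigma
  rw [← Finset.prod_mul_distrib]
  refine Finset.prod_congr rfl fun i _ => ?_
  rw [← Finset.prod_mul_distrib]
  refine Finset.prod_congr rfl fun j _ => ?_
  split
  · rw [Pi.add_apply, add_mul, zpow_add₀ (hQ.2.2 j i)]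
  · rw [one_mul]

lemma qsigma_add_right (m n n' : Fin d → ℤ) :
    qsigma d Q m (n + n') = qsigma d Q m n * qsigma d Q m n' := by
  unfold qsigma
  rw [← Finset.prod_mul_distrib]
  refine Finset.prod_congr rfl fun i _ => ?_
  rw [← Finset.prod_mul_distrib]
  refine Finset.prod_congr rfl fun j _ => ?_
  split
  · rw [Pi.add_apply, mul_add, zpow_add₀ (hQ.2.2 j i)]
  · rw [one_mul]

omit hQ in
lemma qsigma_zero_left (n : Fin d → ℤ) : qsigma d Q 0 n = 1 := by
  unfold qsigma
  refine Finset.prod_eq_one fun i _ => Finset.prod_eq_one fun j _ => ?_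
  split <;> simp

omit hQ in
lemma qsigma_zero_right (n : Fin d → ℤ) : qsigma d Q n 0 = 1 := by
  unfold qsigma
  refine Finset.prod_eq_one fun i _ => Finset.prod_eq_one fun j _ => ?_
  split <;> simp

lemma qsigma_neg_left (m n : Fin d → ℤ) :
    qsigma d Q (-m) n = (qsigma d Q m n)⁻¹ := by
  have h := qsigma_add_left hQ (-m) m n
  rw [neg_add_cancel, qsigma_zero_left] at h
  exact eq_inv_of_mul_eq_one_left h.symm

end Qsigma

section BChar
variable (hQ : QOk d Q)

/-- The alternating bicharacter β(m,n) = σ(m,n)/σ(n,m). -/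
noncomputable def bchar (d : ℕ) (Q : Matrix (Fin d) (Fin d) ℂ) (m n : Fin d → ℤ) : ℂ :=
  qsigma d Q m n / qsigma d Q n m

include hQ

lemma bchar_ne_zero (m n : Fin d → ℤ) : bchar d Q m n ≠ 0 :=
  div_ne_zero (qsigma_ne_zero hQ m n) (qsigma_ne_zero hQ n m)

lemma bchar_add_right (m n n' : Fin d → ℤ) :
    bchar d Q m (n + n') = bchar d Q m n * bchar d Q m n' := by
  unfold bchar
  rw [qsigma_add_right hQ, qsigma_add_left hQ]
  field_simp

lemma bchar_add_left (m m' n : Fin d → ℤ) :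
    bchar d Q (m + m') n = bchar d Q m n * bchar d Q m' n := by
  unfold bchar
  rw [qsigma_add_right hQ, qsigma_add_left hQ]
  field_simp

lemma bchar_eq_one_iff (m n : Fin d → ℤ) :
    bchar d Q m n = 1 ↔ qsigma d Q m n = qsigma d Q n m := by
  unfold bchar
  rw [div_eq_one_iff_eq (qsigma_ne_zero hQ n m)]

omit hQ in
lemma mem_Rset_iff (m : Fin d → ℤ) :
    m ∈ Rset d Q ↔ ∀ n, qsigma d Q m n = qsigma d Q n m := Iff.rfl

lemma mem_Rset_iff_bchar (m : Fin d → ℤ) :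
    m ∈ Rset d Q ↔ ∀ n, bchar d Q m n = 1 := by
  simp only [mem_Rset_iff]
  exact forall_congr' fun n => (bchar_eq_one_iff hQ m n).symm

omit hQ in
lemma zero_mem_Rset : (0 : Fin d → ℤ) ∈ Rset d Q := by
  intro n
  rw [qsigma_zero_left, qsigma_zero_right]

lemma add_mem_Rset {m m' : Fin d → ℤ} (h : m ∈ Rset d Q) (h' : m' ∈ Rset d Q) :
    m + m' ∈ Rset d Q := by
  intro n
  rw [qsigma_add_left hQ, qsigma_add_right hQ, h n, h' n]

omit hQ in
lemma not_mem_Rset_ne_zero {m : Fin d → ℤ} (h : m ∉ Rset d Q) : m ≠ 0 := by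
  rintro rfl; exact h zero_mem_Rset

lemma bchar_self (m : Fin d → ℤ) : bchar d Q m m = 1 := by
  unfold bchar
  rw [div_self (qsigma_ne_zero hQ m m)]

lemma bchar_comm (m n : Fin d → ℤ) : bchar d Q n m = (bchar d Q m n)⁻¹ := by
  unfold bchar
  rw [inv_div]

lemma exists_bchar_ne_one {m : Fin d → ℤ} (h : m ∉ Rset d Q) :
    ∃ n, bchar d Q m n ≠ 1 := by
  by_contra hc
  push_neg at hc
  exact h ((mem_Rset_iff_bchar hQ m).2 hc)

end BChar

section IpLemmas

lemma ip_add (m n : Fin d → ℤ) : ip d γ (m + n) = ip d γ m + ip d γ n := by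
  unfold ip
  rw [← Finset.sum_add_distrib]
  refine Finset.sum_congr rfl fun i _ => ?_
  simp only [Pi.add_apply]
  push_cast
  ring

lemma ip_zero : ip d γ (0 : Fin d → ℤ) = 0 := by
  unfold ip; simp

lemma ip_neg (m : Fin d → ℤ) : ip d γ (-m) = - ip d γ m := by
  have := ip_add (γ := γ) m (-m)
  rw [add_neg_cancel, ip_zero] at this
  linear_combination -this

lemma generic_ip_ne_zero (hγ : Generic d γ) {m : Fin d → ℤ} (hm : m ≠ 0) :
    ip d γ m ≠ 0 := by
  intro h0
  apply hm
  have hli := Fintype.linearIndependent_iff.1 hγ (fun i => (m i : ℚ))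
  have hz : ∑ i : Fin d, ((m i : ℚ)) • γ i = 0 := by
    rw [← h0]
    unfold ip
    refine Finset.sum_congr rfl fun i _ => ?_
    rw [Rat.smul_def]
    push_cast
    ring
  funext i
  have := hli hz i
  exact_mod_cast this

lemma generic_ip_inj (hγ : Generic d γ) {m n : Fin d → ℤ} (h : ip d γ m = ip d γ n) :
    m = n := by
  by_contra hne
  have : m - n ≠ 0 := sub_ne_zero.2 hne
  apply generic_ip_ne_zero hγ this
  have := ip_add (γ := γ) (m - n) n
  rw [sub_add_cancel] at this
  linear_combination h - this

end IpLemmas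

section ScLemmas
variable (hQ : QOk d Q) (hγ : Generic d γ)

lemma sc_RR {m n : Fin d → ℤ} (hm : m ∈ Rset d Q) (hn : n ∈ Rset d Q) :
    sc d Q γ m n = qsigma d Q m n * ip d γ (n - m) := by
  unfold sc; rw [if_pos hm, if_pos hn]

lemma sc_RN {m n : Fin d → ℤ} (hm : m ∈ Rset d Q) (hn : n ∉ Rset d Q) :
    sc d Q γ m n = qsigma d Q m n * ip d γ n := by
  unfold sc; rw [if_pos hm, if_neg hn]

lemma sc_NR {m n : Fin d → ℤ} (hm : m ∉ Rset d Q) (hn : n ∈ Rset d Q) :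
    sc d Q γ m n = -(qsigma d Q n m * ip d γ m) := by
  unfold sc; rw [if_neg hm, if_pos hn]

lemma sc_NN {m n : Fin d → ℤ} (hm : m ∉ Rset d Q) (hn : n ∉ Rset d Q) :
    sc d Q γ m n = qsigma d Q m n - qsigma d Q n m := by
  unfold sc; rw [if_neg hm, if_neg hn]

include hQ hγ

lemma sc_RR_ne {m n : Fin d → ℤ} (hm : m ∈ Rset d Q) (hn : n ∈ Rset d Q)
    (hne : m ≠ n) : sc d Q γ m n ≠ 0 := by
  rw [sc_RR hm hn]
  exact mul_ne_zero (qsigma_ne_zero hQ m n)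
    (generic_ip_ne_zero hγ (sub_ne_zero.2 (Ne.symm hne)))

lemma sc_RN_ne {m n : Fin d → ℤ} (hm : m ∈ Rset d Q) (hn : n ∉ Rset d Q) :
    sc d Q γ m n ≠ 0 := by
  rw [sc_RN hm hn]
  exact mul_ne_zero (qsigma_ne_zero hQ m n)
    (generic_ip_ne_zero hγ (not_mem_Rset_ne_zero hn))

lemma sc_NR_ne {m n : Fin d → ℤ} (hm : m ∉ Rset d Q) (hn : n ∈ Rset d Q) :
    sc d Q γ m n ≠ 0 := by
  rw [sc_NR hm hn]
  exact neg_ne_zero.2 (mul_ne_zero (qsigma_ne_zero hQ n m)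
    (generic_ip_ne_zero hγ (not_mem_Rset_ne_zero hm)))

omit hγ in
lemma sc_NN_ne {m n : Fin d → ℤ} (hm : m ∉ Rset d Q) (hn : n ∉ Rset d Q)
    (h : bchar d Q m n ≠ 1) : sc d Q γ m n ≠ 0 := by
  rw [sc_NN hm hn]
  exact sub_ne_zero.2 fun hc => h ((bchar_eq_one_iff hQ m n).2 hc)

lemma sc_zero_left (n : Fin d → ℤ) : sc d Q γ 0 n = ip d γ n := by
  by_cases hn : n ∈ Rset d Q
  · rw [sc_RR zero_mem_Rset hn, qsigma_zero_left, sub_zero, one_mul]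
  · rw [sc_RN zero_mem_Rset hn, qsigma_zero_left, one_mul]

end ScLemmas

section Zsmul

lemma qsigma_zsmul_left (hQ : QOk d Q) (k : ℤ) (m n : Fin d → ℤ) :
    qsigma d Q (k • m) n = (qsigma d Q m n) ^ k := by
  unfold qsigma
  rw [← Finset.prod_zpow]
  refine Finset.prod_congr rfl fun i _ => ?_
  rw [← Finset.prod_zpow]
  refine Finset.prod_congr rfl fun j _ => ?_
  split
  · rw [Pi.smul_apply, smul_eq_mul]
    rw [show k * m j * n i = m j * n i * k by ring, zpow_mul]
  · rw [one_zpow]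

lemma qsigma_zsmul_right (hQ : QOk d Q) (k : ℤ) (m n : Fin d → ℤ) :
    qsigma d Q m (k • n) = (qsigma d Q m n) ^ k := by
  unfold qsigma
  rw [← Finset.prod_zpow]
  refine Finset.prod_congr rfl fun i _ => ?_
  rw [← Finset.prod_zpow]
  refine Finset.prod_congr rfl fun j _ => ?_
  split
  · rw [Pi.smul_apply, smul_eq_mul]
    rw [show m j * (k * n i) = m j * n i * k by ring, zpow_mul]
  · rw [one_zpow]

lemma zsmul_mem_Rset (hQ : QOk d Q) {m : Fin d → ℤ} (hm : m ∈ Rset d Q) (k : ℤ) :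
    k • m ∈ Rset d Q := by
  intro n
  rw [qsigma_zsmul_left hQ, qsigma_zsmul_right hQ, hm n]

lemma zsmul_ne_zsmul {u : Fin d → ℤ} (hu : u ≠ 0) {k l : ℤ} (hkl : k ≠ l) :
    k • u ≠ l • u := by
  intro h
  have h2 : (k - l) • u = 0 := by rw [sub_smul, h, sub_self]
  obtain ⟨i, hi⟩ := Function.ne_iff.1 hu
  have h3 := congrFun h2 i
  simp only [Pi.smul_apply, smul_eq_mul, Pi.zero_apply] at h3 hi
  rcases mul_eq_zero.1 h3 with h4 | h4
  · exact hkl (sub_eq_zero.1 h4)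
  · exact hi h4

lemma bchar_eq_one_of_right_mem (hQ : QOk d Q) {n : Fin d → ℤ} (hn : n ∈ Rset d Q)
    (m : Fin d → ℤ) : bchar d Q m n = 1 := by
  unfold bchar
  rw [hn m, div_self (qsigma_ne_zero hQ m n)]

lemma bchar_eq_one_of_left_mem (hQ : QOk d Q) {m : Fin d → ℤ} (hm : m ∈ Rset d Q)
    (n : Fin d → ℤ) : bchar d Q m n = 1 := by
  unfold bchar
  rw [hm n, div_self (qsigma_ne_zero hQ n m)]

lemma not_mem_of_bchar_ne_one (hQ : QOk d Q) {m n : Fin d → ℤ}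
    (h : bchar d Q m n ≠ 1) : n ∉ Rset d Q :=
  fun hn => h (bchar_eq_one_of_right_mem hQ hn m)

lemma not_mem_of_bchar_ne_one' (hQ : QOk d Q) {m n : Fin d → ℤ}
    (h : bchar d Q m n ≠ 1) : m ∉ Rset d Q :=
  fun hm => h (bchar_eq_one_of_left_mem hQ hm n)

end Zsmul

section Stuck

lemma pigeonA {a u : ℂ} (h1 : a * u = 1) (h2 : a * (a * u) = 1) : a = 1 := by
  rw [h1, mul_one] at h2; exact h2

lemma pigeonB {a u : ℂ} (h1 : a * u = 1) (h3 : a * (a * (a * u)) = 1) : a * a = 1 := by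
  rw [h1, mul_one] at h3; exact h3

lemma pigeonC {a u : ℂ} (h2 : a * (a * u) = 1) (h3 : a * (a * (a * u)) = 1) : a = 1 := by
  rw [h2, mul_one] at h3; exact h3

variable (hQ : QOk d Q)
include hQ

/-- If x,y,x+y are all outside R and the three kernels cover everything, then
the character of x is 2-torsion, i.e. x+x ∈ R. -/
lemma stuck {x y : Fin d → ℤ} (hx : x ∉ Rset d Q) (hy : y ∉ Rset d Q)
    (hxy : x + y ∉ Rset d Q)
    (hcov : ∀ z, bchar d Q x z = 1 ∨ bchar d Q y z = 1 ∨
      bchar d Q x z * bchar d Q y z = 1) :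
    x + x ∈ Rset d Q := by
  rw [mem_Rset_iff_bchar hQ]
  intro w
  rw [bchar_add_left hQ]
  by_contra hw
  have ha : bchar d Q x w ≠ 1 := fun h => hw (by rw [h, one_mul])
  rcases hcov w with h | hb | hab
  · exact ha h
  · -- case bchar y w = 1
    obtain ⟨p, hp⟩ := exists_bchar_ne_one hQ hy
    obtain ⟨q, hq⟩ := exists_bchar_ne_one hQ hxy
    rw [bchar_add_left hQ] at hq
    have hv : ∃ v, bchar d Q y v ≠ 1 ∧ bchar d Q x v * bchar d Q y v ≠ 1 := by
      by_cases h1 : bchar d Q x p * bchar d Q y p = 1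
      · by_cases h2 : bchar d Q y q = 1
        · refine ⟨p + q, ?_, ?_⟩
          · rw [bchar_add_right hQ, h2, mul_one]; exact hp
          · rw [bchar_add_right hQ, bchar_add_right hQ]
            intro hc
            apply hq
            linear_combination hc - (bchar d Q x q * bchar d Q y q) * h1
        · exact ⟨q, h2, hq⟩
      · exact ⟨p, hp, h1⟩
    obtain ⟨v, hE, hCE⟩ := hv
    have g1 := hcov (w + v)
    have g2 := hcov (w + (w + v))
    have g3 := hcov (w + (w + (w + v)))
    simp only [bchar_add_right hQ, hb, one_mul] at g1 g2 g3
    set a := bchar d Q x w with ha_def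
    set C := bchar d Q x v with hC.def
    set E := bchar d Q y v with hE_def
    have G1 : a * C = 1 ∨ a * (C * E) = 1 := by
      rcases g1 with p | p | p
      · exact Or.inl p
      · exact absurd p hE
      · exact Or.inr (by linear_combination p)
    have G2 : a * (a * C) = 1 ∨ a * (a * (C * E)) = 1 := by
      rcases g2 with p | p | p
      · exact Or.inl p
      · exact absurd p hE
      · exact Or.inr (by linear_combination p)
    have G3 : a * (a * (a * C)) = 1 ∨ a * (a * (a * (C * E))) = 1 := by
      rcases g3 with p | p | p
      · exact Or.inl p
      · exact absurd p hE
      · exact Or.inr (by linear_combination p)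
    rcases G1 with p1 | p1 <;> rcases G2 with p2 | p2 <;> rcases G3 with p3 | p3
    · exact ha (pigeonA p1 p2)
    · exact ha (pigeonA p1 p2)
    · exact hw (pigeonB p1 p3)
    · exact ha (pigeonC p2 p3)
    · exact ha (pigeonC p2 p3)
    · exact hw (pigeonB p1 p3)
    · exact ha (pigeonA p1 p2)
    · exact ha (pigeonA p1 p2)
  · -- case bchar x w * bchar y w = 1
    obtain ⟨v, hv⟩ := exists_bchar_ne_one hQ hxy
    rw [bchar_add_left hQ] at hv
    have g1 := hcov (w + v)
    have g2 := hcov (w + (w + v))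
    have g3 := hcov (w + (w + (w + v)))
    simp only [bchar_add_right hQ] at g1 g2 g3
    set a := bchar d Q x w with ha_def
    set b := bchar d Q y w with hb_def
    set C := bchar d Q x v with hC_def
    set E := bchar d Q y v with hE_def
    have G1 : a * C = 1 ∨ b * E = 1 := by
      rcases g1 with p | p | p
      · exact Or.inl p
      · exact Or.inr p
      · exact absurd (by linear_combination p - (C*E)*hab : C * E = 1) hv
    have G2 : a * (a * C) = 1 ∨ b * (b * E) = 1 := by
      rcases g2 with p | p | p
      · exact Or.inl p
      · exact Or.inr p
      · exact absurd (by linear_combination p - (C*E)*(a*b+1)*hab : C * E = 1) hv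
    have G3 : a * (a * (a * C)) = 1 ∨ b * (b * (b * E)) = 1 := by
      rcases g3 with p | p | p
      · exact Or.inl p
      · exact Or.inr p
      · exact absurd
          (by linear_combination p - (C*E)*(a*b*(a*b)+a*b+1)*hab : C * E = 1) hv
    rcases G1 with p1 | p1 <;> rcases G2 with p2 | p2 <;> rcases G3 with p3 | p3
    · exact ha (pigeonA p1 p2)
    · exact ha (pigeonA p1 p2)
    · exact hw (pigeonB p1 p3)
    · -- B2, B3
      have hb1 : b = 1 := pigeonC p2 p3
      exact ha (by linear_combination hab - a*hb1)
    · exact ha (pigeonC p2 p3)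
    · -- B1, B3
      have hbb : b * b = 1 := pigeonB p1 p3
      exact hw (by linear_combination (-(a*a))*hbb + (a*b+1)*hab)
    · -- B1, B2
      have hb1 : b = 1 := pigeonA p1 p2
      exact ha (by linear_combination hab - a*hb1)
    · have hb1 : b = 1 := pigeonA p1 p2
      exact ha (by linear_combination hab - a*hb1)

end Stuck

section Phi
variable (hQ : QOk d Q) (hγ : Generic d γ) (hd : 0 < d) (φ : (Fin d → ℤ) → ℂ)
variable (Hφ : ∀ m n, sc d Q γ m n ≠ 0 → φ (m + n) = φ m + φ n)
include hQ hγ hd Hφ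

lemma phi_zero : φ 0 = 0 := by
  set v : Fin d → ℤ := fun _ => 1 with hv_def
  have hv0 : v ≠ 0 := by
    intro h
    have := congrFun h ⟨0, hd⟩
    simp [hv_def] at this
  by_cases hv : v ∈ Rset d Q
  · have h := Hφ 0 v (sc_RR_ne hQ hγ zero_mem_Rset hv (fun h => hv0 h.symm))
    rw [zero_add] at h
    linear_combination -h
  · have h := Hφ 0 v (sc_RN_ne hQ hγ zero_mem_Rset hv)
    rw [zero_add] at h
    linear_combination -h

lemma phi_addR {u v : Fin d → ℤ} (hu : u ∈ Rset d Q) (hv : v ∈ Rset d Q) :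
    φ (u + v) = φ u + φ v := by
  rcases eq_or_ne u v with rfl | hne
  · rcases eq_or_ne u 0 with rfl | hu0
    · rw [add_zero, phi_zero hQ hγ hd φ Hφ]; ring
    · have key : ∀ k l : ℤ, k ≠ l → φ ((k + l) • u) = φ (k • u) + φ (l • u) := by
        intro k l hkl
        have h := Hφ (k • u) (l • u)
          (sc_RR_ne hQ hγ (zsmul_mem_Rset hQ hu k) (zsmul_mem_Rset hQ hu l)
            (zsmul_ne_zsmul hu0 hkl))
        rw [add_smul]
        exact h
      have h12 := key 1 2 (by norm_num)
      have h4m := key 4 (-1) (by norm_num)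
      have h13 := key 1 3 (by norm_num)
      have h23 := key 2 3 (by norm_num)
      have h5m := key 5 (-1) (by norm_num)
      norm_num at h12 h4m h13 h23 h5m
      have goal2 : φ (2 * u) = 2 * φ u := by
        linear_combination h4m + 2*h13 - h23 - h5m
      have e2 : u + u = 2 * u := by ring
      rw [e2, goal2]; ring
  · exact Hφ u v (sc_RR_ne hQ hγ hu hv hne)

lemma phi_dbl {u : Fin d → ℤ} (hu : u ∉ Rset d Q) (huu : u + u ∈ Rset d Q) :
    φ (u + u) = φ u + φ u := by
  obtain ⟨z, hz⟩ := exists_bchar_ne_one hQ hu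
  have hzR : z ∉ Rset d Q := not_mem_of_bchar_ne_one hQ hz
  have c1 : φ (u + z) = φ u + φ z := Hφ u z (sc_NN_ne hQ hu hzR hz)
  have c2 : φ ((u + z) + u) = φ (u + z) + φ u := by
    by_cases huz : u + z ∈ Rset d Q
    · exact Hφ _ _ (sc_RN_ne hQ hγ huz hu)
    · refine Hφ _ _ (sc_NN_ne hQ huz hu ?_)
      rw [bchar_add_left hQ, bchar_self hQ, one_mul, bchar_comm hQ]
      intro hc
      exact hz (by rwa [inv_eq_one] at hc)
  have c3 : φ ((u + u) + z) = φ (u + u) + φ z := Hφ _ _ (sc_RN_ne hQ hγ huu hzR)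
  have e : (u + z) + u = (u + u) + z := by ring
  rw [e, c3, c1] at c2
  linear_combination c2

lemma phi_key {x y : Fin d → ℤ} (hx : x ∉ Rset d Q) (hy : y ∉ Rset d Q)
    (hb : bchar d Q x y = 1) : φ (x + y) = φ x + φ y := by
  by_cases hgood : ∃ z, bchar d Q x z ≠ 1 ∧ bchar d Q y z ≠ 1 ∧
      (x + y ∈ Rset d Q ∨ bchar d Q (x + y) z ≠ 1)
  · obtain ⟨z, hz1, hz2, hz3⟩ := hgood
    have hzR : z ∉ Rset d Q := not_mem_of_bchar_ne_one hQ hz1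
    have hxyz : bchar d Q x (y + z) ≠ 1 := by
      rw [bchar_add_right hQ, hb, one_mul]; exact hz1
    have hyzR : y + z ∉ Rset d Q := not_mem_of_bchar_ne_one hQ hxyz
    have A1 : φ (y + z) = φ y + φ z := Hφ _ _ (sc_NN_ne hQ hy hzR hz2)
    have A2 : φ (x + (y + z)) = φ x + φ (y + z) := Hφ _ _ (sc_NN_ne hQ hx hyzR hxyz)
    have A3 : φ ((x + y) + z) = φ (x + y) + φ z := by
      rcases hz3 with hmem | hne
      · exact Hφ _ _ (sc_RN_ne hQ hγ hmem hzR)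
      · exact Hφ _ _ (sc_NN_ne hQ (not_mem_of_bchar_ne_one' hQ hne) hzR hne)
    have e : x + (y + z) = (x + y) + z := by ring
    rw [e, A3, A1] at A2
    linear_combination A2
  · have hng : ∀ z, ¬(bchar d Q x z ≠ 1 ∧ bchar d Q y z ≠ 1 ∧
        (x + y ∈ Rset d Q ∨ bchar d Q (x + y) z ≠ 1)) := fun z hc => hgood ⟨z, hc⟩
    have hxyR : x + y ∉ Rset d Q := by
      intro hmem
      obtain ⟨z0, hz0⟩ := exists_bchar_ne_one hQ hx
      have hyz0 : bchar d Q y z0 ≠ 1 := by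
        intro h1
        apply hz0
        have h2 := bchar_eq_one_of_left_mem hQ hmem z0
        rw [bchar_add_left hQ, h1, mul_one] at h2
        exact h2
      exact hng z0 ⟨hz0, hyz0, Or.inl hmem⟩
    have hcov : ∀ z, bchar d Q x z = 1 ∨ bchar d Q y z = 1 ∨
        bchar d Q x z * bchar d Q y z = 1 := by
      intro z
      by_cases h1 : bchar d Q x z = 1
      · exact Or.inl h1
      by_cases h2 : bchar d Q y z = 1
      · exact Or.inr (Or.inl h2)
      by_contra h4
      push_neg at h4
      apply hng z
      refine ⟨h1, h2, Or.inr ?_⟩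
      rw [bchar_add_left hQ]
      exact h4.2.2
    have hxx := stuck hQ hx hy hxyR hcov
    have hyy := stuck hQ hy hx (by rwa [add_comm]) (fun z => by
      rcases hcov z with h | h | h
      · exact Or.inr (Or.inl h)
      · exact Or.inl h
      · exact Or.inr (Or.inr (by rwa [mul_comm])))
    rcases eq_or_ne x y with rfl | hne
    · exact phi_dbl hQ hγ hd φ Hφ hx hxx
    · have d1 := phi_dbl hQ hγ hd φ Hφ hx hxx
      have d2 := phi_dbl hQ hγ hd φ Hφ hy hyy
      have hs : (x + y) + (x + y) ∈ Rset d Q := by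
        have e : (x + y) + (x + y) = (x + x) + (y + y) := by ring
        rw [e]
        exact add_mem_Rset hQ hxx hyy
      have dxy := phi_dbl hQ hγ hd φ Hφ hxyR hs
      have dRR : φ ((x + x) + (y + y)) = φ (x + x) + φ (y + y) :=
        phi_addR hQ hγ hd φ Hφ hxx hyy
      have e : (x + x) + (y + y) = (x + y) + (x + y) := by ring
      rw [e] at dRR
      linear_combination (dRR - dxy + d1 + d2) / 2

lemma phi_add (m n : Fin d → ℤ) : φ (m + n) = φ m + φ n := by
  by_cases hm : m ∈ Rset d Q
  · by_cases hn : n ∈ Rset d Q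
    · exact phi_addR hQ hγ hd φ Hφ hm hn
    · exact Hφ m n (sc_RN_ne hQ hγ hm hn)
  · by_cases hn : n ∈ Rset d Q
    · exact Hφ m n (sc_NR_ne hQ hγ hm hn)
    · by_cases hbc : bchar d Q m n = 1
      · exact phi_key hQ hγ hd φ Hφ hm hn hbc
      · exact Hφ m n (sc_NN_ne hQ hm hn hbc)

end Phi

section FinsuppTools
variable (Q) (γ)

lemma br_add_right (x y z : g d) :
    br d Q γ x (y + z) = br d Q γ x y + br d Q γ x z := by
  unfold br
  rw [← Finsupp.sum_add]
  refine Finsupp.sum_congr fun m _ => ?_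
  apply Finsupp.sum_add_index
  · intro n _
    simp
  · intro n _ b1 b2
    rw [← Finsupp.single_add]
    congr 1
    ring

lemma br_smul_right (c : ℂ) (x y : g d) :
    br d Q γ x (c • y) = c • br d Q γ x y := by
  unfold br
  rw [Finsupp.smul_sum]
  refine Finsupp.sum_congr fun m _ => ?_
  rw [Finsupp.sum_smul_index (fun n => by simp), Finsupp.smul_sum]
  refine Finsupp.sum_congr fun n _ => ?_
  rw [Finsupp.smul_single, smul_eq_mul]
  congr 1
  ring

/-- br with fixed left argument, as a linear map. -/
noncomputable def brLin (x : g d) : g d →ₗ[ℂ] g d where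
  toFun y := br d Q γ x y
  map_add' := br_add_right Q γ x
  map_smul' c y := by simpa using br_smul_right Q γ c x y

@[simp] lemma brLin_apply (x y : g d) : brLin Q γ x y = br d Q γ x y := rfl

lemma deg_add (i : Fin d) (y z : g d) : deg d i (y + z) = deg d i y + deg d i z := by
  unfold deg
  apply Finsupp.sum_add_index
  · intro n _; simp
  · intro n _ b1 b2
    rw [← Finsupp.single_add]
    congr 1
    ring

lemma deg_smul (i : Fin d) (c : ℂ) (y : g d) : deg d i (c • y) = c • deg d i y := by
  unfold deg
  rw [Finsupp.sum_smul_index (fun n => by simp), Finsupp.smul_sum]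
  refine Finsupp.sum_congr fun n _ => ?_
  rw [Finsupp.smul_single, smul_eq_mul]
  congr 1
  ring

/-- deg as a linear map. -/
noncomputable def degLin (i : Fin d) : g d →ₗ[ℂ] g d where
  toFun := deg d i
  map_add' := deg_add i
  map_smul' c y := by simpa using deg_smul i c y

@[simp] lemma degLin_apply (i : Fin d) (y : g d) : degLin i y = deg d i y := rfl

lemma br_single_left (m : Fin d → ℤ) (y : g d) :
    br d Q γ (L d m) y = y.sum fun n b => Finsupp.single (m + n) (b * sc d Q γ m n) := by
  unfold br L
  rw [Finsupp.sum_single_index]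
  · simp only [one_mul]
  · simp

lemma br_single_right (x : g d) (n : Fin d → ℤ) :
    br d Q γ x (L d n) = x.sum fun m a => Finsupp.single (m + n) (a * sc d Q γ m n) := by
  unfold br L
  refine Finsupp.sum_congr fun m _ => ?_
  rw [Finsupp.sum_single_index]
  · simp only [mul_one]
  · simp

lemma br_single_single (m n : Fin d → ℤ) :
    br d Q γ (L d m) (L d n) = Finsupp.single (m + n) (sc d Q γ m n) := by
  rw [br_single_left]
  unfold L
  rw [Finsupp.sum_single_index]
  · simp only [one_mul]
  · simp

lemma coeff_br_right (x : g d) (n p : Fin d → ℤ) :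
    (br d Q γ x (L d n)) p = x (p - n) * sc d Q γ (p - n) n := by
  rw [br_single_right, Finsupp.sum_apply, Finsupp.sum]
  have hcong : ∀ m ∈ x.support,
      (Finsupp.single (m + n) (x m * sc d Q γ m n) : g d) p
        = if m = p - n then x m * sc d Q γ m n else 0 := by
    intro m _
    rw [Finsupp.single_apply]
    exact if_congr eq_sub_iff_add_eq.symm rfl rfl
  rw [Finset.sum_congr rfl hcong, Finset.sum_ite_eq' x.support (p - n)]
  by_cases hmem : p - n ∈ x.support
  · rw [if_pos hmem]
  · rw [if_neg hmem, Finsupp.notMem_support_iff.mp hmem, zero_mul]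

lemma coeff_br_left (m : Fin d → ℤ) (y : g d) (p : Fin d → ℤ) :
    (br d Q γ (L d m) y) p = y (p - m) * sc d Q γ m (p - m) := by
  rw [br_single_left, Finsupp.sum_apply, Finsupp.sum]
  have hcong : ∀ n ∈ y.support,
      (Finsupp.single (m + n) (y n * sc d Q γ m n) : g d) p
        = if n = p - m then y n * sc d Q γ m n else 0 := by
    intro n _
    rw [Finsupp.single_apply]
    refine if_congr ?_ rfl rfl
    rw [eq_sub_iff_add_eq, add_comm]
  rw [Finset.sum_congr rfl hcong, Finset.sum_ite_eq' y.support (p - m)]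
  by_cases hmem : p - m ∈ y.support
  · rw [if_pos hmem]
  · rw [if_neg hmem, Finsupp.notMem_support_iff.mp hmem, zero_mul]

lemma deg_single (i : Fin d) (n : Fin d → ℤ) :
    deg d i (L d n) = Finsupp.single n ((n i : ℂ)) := by
  unfold deg L
  rw [Finsupp.sum_single_index]
  · rw [mul_one]
  · simp

end FinsuppTools

section Cover
variable (hQ : QOk d Q) (hγ : Generic d γ)
include hQ

lemma bchar_zero_right (m : Fin d → ℤ) : bchar d Q m 0 = 1 := by
  unfold bchar
  rw [qsigma_zero_left, qsigma_zero_right, div_one]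

lemma bchar_zsmul_right (k : ℤ) (m n : Fin d → ℤ) :
    bchar d Q m (k • n) = bchar d Q m n ^ k := by
  unfold bchar
  rw [qsigma_zsmul_right hQ, qsigma_zsmul_left hQ, div_zpow]

lemma bchar_sum_right {ι : Type*} (m : Fin d → ℤ) (s : Finset ι) (f : ι → (Fin d → ℤ)) :
    bchar d Q m (∑ i ∈ s, f i) = ∏ i ∈ s, bchar d Q m (f i) := by
  classical
  induction s using Finset.induction_on with
  | empty => simp [bchar_zero_right hQ]
  | insert _ _ h ih =>
      rw [Finset.sum_insert h, Finset.prod_insert h, bchar_add_right hQ, ih]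

lemma mem_Rset_of_basis {r : Fin d → ℤ}
    (h : ∀ i : Fin d, bchar d Q r (Pi.single i 1) = 1) : r ∈ Rset d Q := by
  rw [mem_Rset_iff_bchar hQ]
  intro n
  have hn : n = ∑ i : Fin d, n i • (Pi.single i 1 : Fin d → ℤ) := by
    have h2 : ∀ i : Fin d, n i • (Pi.single i 1 : Fin d → ℤ) = Pi.single i (n i) := by
      intro i
      rw [← Pi.single_smul, smul_eq_mul, mul_one]
    rw [Finset.sum_congr rfl fun i _ => h2 i, Finset.univ_sum_single]
  rw [hn, bchar_sum_right hQ]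
  refine Finset.prod_eq_one fun i _ => ?_
  rw [bchar_zsmul_right hQ, h i, one_zpow]

include hγ

lemma cover_lemma (hd : 1 < d) {r : Fin d → ℤ} (hr : r ≠ 0) :
    ∃ i : Fin d, sc d Q γ r (Pi.single i 1) ≠ 0 := by
  have h0d : 0 < d := by omega
  have hsne : ∀ i : Fin d, (Pi.single i 1 : Fin d → ℤ) ≠ 0 := by
    intro i h
    have := congrFun h i
    simp at this
  by_cases hrR : r ∈ Rset d Q
  · -- pick i with single i 1 ≠ r
    have hex : ∃ i : Fin d, (Pi.single i 1 : Fin d → ℤ) ≠ r := by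
      by_contra hc
      push_neg at hc
      have h1 := hc ⟨0, by omega⟩
      have h2 := hc ⟨1, by omega⟩
      rw [← h2] at h1
      have := congrFun h1 ⟨0, by omega⟩
      rw [Pi.single_eq_same] at this
      rw [Pi.single_eq_of_ne (by simp [Fin.ext_iff]) 1] at this
      exact one_ne_zero this
    obtain ⟨i, hi⟩ := hex
    by_cases hiR : (Pi.single i 1 : Fin d → ℤ) ∈ Rset d Q
    · exact ⟨i, sc_RR_ne hQ hγ hrR hiR (fun h => hi h.symm)⟩
    · exact ⟨i, sc_RN_ne hQ hγ hrR hiR⟩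
  · by_cases hall : ∃ i : Fin d, (Pi.single i 1 : Fin d → ℤ) ∈ Rset d Q
    · obtain ⟨i, hi⟩ := hall
      exact ⟨i, sc_NR_ne hQ hγ hrR hi⟩
    · push_neg at hall
      have hex : ∃ i : Fin d, bchar d Q r (Pi.single i 1) ≠ 1 := by
        by_contra hc
        push_neg at hc
        exact hrR (mem_Rset_of_basis hQ hc)
      obtain ⟨i, hi⟩ := hex
      exact ⟨i, sc_NN_ne hQ hrR (hall i) hi⟩

end Cover

end QTorus

open QTorus

/-- every derivation D of g(γ,Q) is of the form ad x + ∑ c_i ∂_i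
for some x ∈ g and scalars c_i, and ad L_0 = γ_1∂_1 + ⋯ + γ_d∂_d. -/
theorem stmt9 (d : ℕ) (hd : 1 < d) (Q : Matrix (Fin d) (Fin d) ℂ) (hQ : QOk d Q)
    (γ : Fin d → ℂ) (hγ : Generic d γ)
    (D : g d →ₗ[ℂ] g d) (hD : IsDer d Q γ D) :
    (∃ (x : g d) (c : Fin d → ℂ),
      ∀ y : g d, D y = br d Q γ x y + ∑ i : Fin d, c i • deg d i y) ∧
    (∀ y : g d, br d Q γ (L d 0) y = ∑ i : Fin d, γ i • deg d i y) := by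
  classical
  have h0d : 0 < d := by omega
  set F : (Fin d → ℤ) → (Fin d → ℤ) → ℂ := fun m p => (D (L d m)) p with hF
  -- single as smul of L
  have hsmulL : ∀ (n : Fin d → ℤ) (cc : ℂ),
      (Finsupp.single n cc : g d) = cc • L d n := by
    intro n cc
    rw [L, Finsupp.smul_single, smul_eq_mul, mul_one]
  -- the degree-shift equation coming from m = 0
  have key0 : ∀ n p : Fin d → ℤ,
      ip d γ n * F n p = F 0 (p - n) * sc d Q γ (p - n) n + F n p * ip d γ p := by
    intro n p
    have hder := hD (L d 0) (L d n)
    rw [br_single_single, zero_add, hsmulL n, map_smul] at hder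
    have happ := DFunLike.congr_fun hder p
    rw [Finsupp.smul_apply, smul_eq_mul, Finsupp.add_apply,
      coeff_br_right, coeff_br_left, sub_zero, sc_zero_left hQ hγ,
      sc_zero_left hQ hγ] at happ
    exact happ
  -- off-diagonal coefficients
  set a : (Fin d → ℤ) → ℂ := fun r => -(F 0 r / ip d γ r) with ha_def
  have hoff : ∀ n p : Fin d → ℤ, p ≠ n →
      F n p = a (p - n) * sc d Q γ (p - n) n := by
    intro n p hne
    have h := key0 n p
    have hipp : ip d γ p = ip d γ (p - n) + ip d γ n := by
      rw [← ip_add]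
      congr 1
      ring
    have hipr : ip d γ (p - n) ≠ 0 :=
      generic_ip_ne_zero hγ (sub_ne_zero.2 hne)
    have h2 : F n p * ip d γ (p - n) = -(F 0 (p - n) * sc d Q γ (p - n) n) := by
      linear_combination -h - F n p * hipp
    rw [ha_def]
    field_simp
    linear_combination h2
  -- diagonal coefficients
  set φ : (Fin d → ℤ) → ℂ := fun n => F n n with hφ_def
  have hphi : ∀ m n : Fin d → ℤ, sc d Q γ m n ≠ 0 → φ (m + n) = φ m + φ n := by
    intro m n hsc
    have hder := hD (L d m) (L d n)
    rw [br_single_single, hsmulL (m+n), map_smul] at hder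
    have happ := DFunLike.congr_fun hder (m + n)
    rw [Finsupp.smul_apply, smul_eq_mul, Finsupp.add_apply,
      coeff_br_right, coeff_br_left, add_sub_cancel_right, add_sub_cancel_left] at happ
    apply mul_left_cancel₀ hsc
    linear_combination happ
  have phi_total := phi_add hQ hγ h0d φ hphi
  set c : Fin d → ℂ := fun i => φ (Pi.single i 1) with hc_def
  have philin : ∀ n : Fin d → ℤ, φ n = ∑ i : Fin d, c i * (n i : ℂ) := by
    intro n
    set Φ : (Fin d → ℤ) →+ ℂ := AddMonoidHom.mk' φ (fun u v => phi_total u v) with hΦ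
    have hn : n = ∑ i : Fin d, n i • (Pi.single i 1 : Fin d → ℤ) := by
      have h2 : ∀ i : Fin d, n i • (Pi.single i 1 : Fin d → ℤ) = Pi.single i (n i) := by
        intro i
        rw [← Pi.single_smul, smul_eq_mul, mul_one]
      rw [Finset.sum_congr rfl fun i _ => h2 i, Finset.univ_sum_single]
    have : Φ n = ∑ i : Fin d, (n i : ℂ) * Φ (Pi.single i 1) := by
      conv_lhs => rw [hn]
      rw [map_sum]
      refine Finset.sum_congr rfl fun i _ => ?_
      rw [map_zsmul, zsmul_eq_mul]
    have hΦn : Φ n = φ n := rfl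
    rw [← hΦn, this]
    refine Finset.sum_congr rfl fun i _ => ?_
    rw [mul_comm]
    rfl
  -- the finite support set
  set T : Finset (Fin d → ℤ) :=
    (Finset.univ.biUnion fun i : Fin d =>
      (D (L d (Pi.single i 1))).support.image
        (fun p => p - Pi.single i 1)).erase 0 with hT_def
  have hTmem : ∀ r : Fin d → ℤ, r ≠ 0 → a r ≠ 0 → r ∈ T := by
    intro r hr har
    obtain ⟨i, hi⟩ := cover_lemma hQ hγ hd hr
    have hne : (Pi.single i 1 : Fin d → ℤ) + r ≠ Pi.single i 1 := by
      intro h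
      apply hr
      have := congrArg (fun z => z - (Pi.single i 1 : Fin d → ℤ)) h
      simpa using this
    have hFne : F (Pi.single i 1) (Pi.single i 1 + r) ≠ 0 := by
      rw [hoff _ _ hne, add_sub_cancel_left]
      exact mul_ne_zero har hi
    rw [hT_def, Finset.mem_erase]
    refine ⟨hr, Finset.mem_biUnion.2 ⟨i, Finset.mem_univ i, Finset.mem_image.2
      ⟨Pi.single i 1 + r, Finsupp.mem_support_iff.2 hFne, by rw [add_sub_cancel_left]⟩⟩⟩
  set x : g d := Finsupp.onFinset T (fun r => if r ∈ T then a r else 0)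
    (fun r h => by by_contra hn; exact h (if_neg hn)) with hx_def
  have hxapp : ∀ r, x r = if r ∈ T then a r else 0 := fun r => rfl
  have h0T : (0 : Fin d → ℤ) ∉ T := by
    rw [hT_def]
    exact fun h => (Finset.mem_erase.1 h).1 rfl
  -- sum of degree derivations applied to a basis vector
  have hdegsum : ∀ (cc : Fin d → ℂ) (n : Fin d → ℤ),
      (∑ i : Fin d, cc i • deg d i (L d n))
        = Finsupp.single n (∑ i : Fin d, cc i * (n i : ℂ)) := by
    intro cc n
    have h1 : ∀ i : Fin d, cc i • deg d i (L d n)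
        = Finsupp.single n (cc i * (n i : ℂ)) := by
      intro i
      rw [deg_single, Finsupp.smul_single, smul_eq_mul]
    rw [Finset.sum_congr rfl fun i _ => h1 i]
    exact (map_sum (Finsupp.singleAddHom n) (fun i => cc i * (n i : ℂ)) Finset.univ).symm
  -- main identity on basis vectors
  have hbasis : ∀ n : Fin d → ℤ,
      D (L d n) = br d Q γ x (L d n) + ∑ i : Fin d, c i • deg d i (L d n) := by
    intro n
    ext p
    rw [Finsupp.add_apply, coeff_br_right, hdegsum]
    rcases eq_or_ne p n with rfl | hne
    · rw [sub_self, hxapp, if_neg h0T, zero_mul, zero_add, Finsupp.single_eq_same]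
      exact philin p
    · rw [Finsupp.single_apply, if_neg (fun h => hne h.symm), add_zero]
      rw [show (D (L d n)) p = F n p from rfl, hoff n p hne, hxapp]
      by_cases hrT : p - n ∈ T
      · rw [if_pos hrT]
      · rw [if_neg hrT]
        by_cases har : a (p - n) = 0
        · simp [har]
        · exact absurd (hTmem (p - n) (sub_ne_zero.2 hne) har) hrT
  constructor
  · refine ⟨x, c, ?_⟩
    have hlin : D = brLin Q γ x + ∑ i : Fin d, c i • degLin i := by
      apply Finsupp.lhom_ext
      intro n b
      have hb : (Finsupp.single n b : g d) = b • L d n := hsmulL n b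
      rw [hb, map_smul, map_smul, hbasis n]
      simp only [LinearMap.add_apply, LinearMap.sum_apply, LinearMap.smul_apply,
        brLin_apply, degLin_apply]
    intro y
    have := DFunLike.congr_fun hlin y
    simp only [LinearMap.add_apply, LinearMap.sum_apply, LinearMap.smul_apply,
      brLin_apply, degLin_apply] at this
    exact this
  · -- ad L_0 = ∑ γ_i ∂_i
    have hlin : brLin Q γ (L d 0) = ∑ i : Fin d, γ i • degLin i := by
      apply Finsupp.lhom_ext
      intro n b
      have hb : (Finsupp.single n b : g d) = b • L d n := hsmulL n b
      rw [hb, map_smul, map_smul]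
      congr 1
      simp only [brLin_apply, LinearMap.sum_apply, LinearMap.smul_apply, degLin_apply]
      rw [br_single_single, zero_add, hdegsum, sc_zero_left hQ hγ]
      rfl
    intro y
    have := DFunLike.congr_fun hlin y
    simp only [LinearMap.add_apply, LinearMap.sum_apply, LinearMap.smul_apply,
      brLin_apply, degLin_apply] at this
    exact this
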